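/- For every a > 0, the supremum of H over the interval (-1, 0) equals H(w_+) and is given explicitly by sup_{w ∈ (-1,0)} H(w) = -a²/4 + (1 + a/2)√(a + a²/4) + log(1 + a/2 - √(a + a²/4)). (This explicit expression is the upper tail large deviation rate function r^stat(a) for the stationary system of reflected Brownian motions.) -/

import Mathlib

open Real

/-- `H a w = (w² - 1)/2 + (2+a)(w+1) + log(-w)` -/
noncomputable def H (a w : ℝ) : ℝ := (w ^ 2 - 1) / 2 + (2 + a) * (w + 1) + Real.log (-w)

/-- `w₊ = -1 - a/2 + √(a + a²/4)` -/
noncomputable def wp (a : ℝ) : ℝ := -1 - a / 2 + Real.sqrt (a + a ^ 2 / 4)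

/-- The upper tail rate function for the stationary initial condition. -/
noncomputable def rStat (a : ℝ) : ℝ :=
  -a ^ 2 / 4 + (1 + a / 2) * Real.sqrt (a + a ^ 2 / 4) +
    Real.log (1 + a / 2 - Real.sqrt (a + a ^ 2 / 4))

lemma H_hasDerivAt (a w : ℝ) (hw : w ≠ 0) :
    HasDerivAt (H a) (w + (2 + a) + w⁻¹) w := by
  have h1 : HasDerivAt (fun x : ℝ => (x ^ 2 - 1) / 2 + (2 + a) * (x + 1)) (w + (2 + a)) w := by
    have := (((hasDerivAt_pow 2 w).sub_const 1).div_const 2).add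
      (((hasDerivAt_id w).add_const 1).const_mul (2 + a))
    refine this.congr_deriv ?_
    simp
  have h2 : HasDerivAt (fun x : ℝ => Real.log (-x)) w⁻¹ w := by
    have := (Real.hasDerivAt_log (neg_ne_zero.mpr hw)).comp w (hasDerivAt_neg w)
    refine this.congr_deriv ?_
    rw [inv_neg]; ring
  exact h1.add h2

theorem stmt_3 (a : ℝ) (ha : 0 < a) :
    sSup (H a '' Set.Ioo (-1 : ℝ) 0) = H a (wp a) ∧ H a (wp a) = rStat a := by
  set s := Real.sqrt (a + a ^ 2 / 4) with hs
  have hsnn : 0 ≤ s := Real.sqrt_nonneg _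
  have hs2 : s ^ 2 = a + a ^ 2 / 4 := Real.sq_sqrt (by positivity)
  have hs_lb : a / 2 < s := by nlinarith
  have hs_ub : s < 1 + a / 2 := by nlinarith
  have hwp1 : -1 < wp a := by rw [wp]; linarith
  have hwp2 : wp a < 0 := by rw [wp]; linarith
  -- derivative sign
  have hderiv : ∀ w : ℝ, w ≠ 0 → deriv (H a) w = w + (2 + a) + w⁻¹ :=
    fun w hw => (H_hasDerivAt a w hw).deriv
  have hpos : ∀ w ∈ Set.Ioo (-1 : ℝ) (wp a), 0 < deriv (H a) w := by
    intro w hw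
    have hw0 : w < 0 := lt_trans hw.2 hwp2
    rw [hderiv w (ne_of_lt hw0)]
    have hnum : w ^ 2 + (2 + a) * w + 1 < 0 := by
      have h1 : 0 < wp a - w := by linarith [hw.2]
      have h2 : 0 < w - (-1 - a / 2 - s) := by linarith [hw.1]
      have := mul_pos h1 h2
      rw [wp] at this
      nlinarith
    have hw' : w ≠ 0 := ne_of_lt hw0
    have heq : w + (2 + a) + w⁻¹ = (w ^ 2 + (2 + a) * w + 1) / w := by
      field_simp
    rw [heq]
    exact div_pos_of_neg_of_neg hnum hw0
  have hneg : ∀ w ∈ Set.Ioo (wp a) (0 : ℝ), deriv (H a) w < 0 := by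
    intro w hw
    have hw0 : w < 0 := hw.2
    rw [hderiv w (ne_of_lt hw0)]
    have hnum : 0 < w ^ 2 + (2 + a) * w + 1 := by
      have h1 : 0 < w - wp a := by linarith [hw.1]
      have h2 : 0 < w - (-1 - a / 2 - s) := by
        have : -1 - a / 2 - s < wp a := by rw [wp]; nlinarith
        linarith [hw.1]
      have := mul_pos h1 h2
      rw [wp] at this
      nlinarith
    have hw' : w ≠ 0 := ne_of_lt hw0
    have heq : w + (2 + a) + w⁻¹ = (w ^ 2 + (2 + a) * w + 1) / w := by
      field_simp
    rw [heq]
    exact div_neg_of_pos_of_neg hnum hw0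
  -- continuity
  have hcont1 : ContinuousOn (H a) (Set.Icc (-1 : ℝ) (wp a)) := by
    intro w hw
    have : w ≠ 0 := ne_of_lt (lt_of_le_of_lt hw.2 hwp2)
    exact (H_hasDerivAt a w this).continuousAt.continuousWithinAt
  have hcont2 : ContinuousOn (H a) (Set.Ico (wp a) (0 : ℝ)) := by
    intro w hw
    have : w ≠ 0 := ne_of_lt hw.2
    exact (H_hasDerivAt a w this).continuousAt.continuousWithinAt
  have hmono : StrictMonoOn (H a) (Set.Icc (-1 : ℝ) (wp a)) := by
    apply strictMonoOn_of_deriv_pos (convex_Icc _ _) hcont1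
    intro w hw
    rw [interior_Icc] at hw
    exact hpos w hw
  have hanti : StrictAntiOn (H a) (Set.Ico (wp a) (0 : ℝ)) := by
    apply strictAntiOn_of_deriv_neg (convex_Ico _ _) hcont2
    intro w hw
    rw [interior_Ico] at hw
    exact hneg w hw
  have hub : ∀ w ∈ Set.Ioo (-1 : ℝ) 0, H a w ≤ H a (wp a) := by
    intro w hw
    rcases le_or_gt w (wp a) with h | h
    · exact hmono.monotoneOn ⟨le_of_lt hw.1, h⟩ ⟨le_of_lt hwp1, le_refl _⟩ h
    · exact hanti.antitoneOn ⟨le_refl _, hwp2⟩ ⟨le_of_lt h, hw.2⟩ (le_of_lt h)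
  have hmem : H a (wp a) ∈ H a '' Set.Ioo (-1 : ℝ) 0 :=
    ⟨wp a, ⟨hwp1, hwp2⟩, rfl⟩
  constructor
  · apply IsGreatest.csSup_eq
    exact ⟨hmem, fun y ⟨w, hw, hwy⟩ => hwy ▸ hub w hw⟩
  · have hneg_wp : -wp a = 1 + a / 2 - s := by rw [wp]; ring
    rw [H, rStat, hneg_wp, ← hs]
    have : (wp a ^ 2 - 1) / 2 + (2 + a) * (wp a + 1) = -a ^ 2 / 4 + (1 + a / 2) * s := by
      rw [wp]; nlinarith [hs2]
    linarith
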